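/- Let n ≥ 7 and let i, j, k be integers with 2 ≤ i ≤ n-5, i+2 < j < n and j+1 < k ≤ n, and set z = (i-1, i)(j-1, k) ∈ S_n. Then s_{i-1}s_i⋯s_{j-1} is a reduced expression (of length j-i+1), and the strong right Bruhat walk of length j-i+1 whose t-th entry is z·s_is_{i+1}⋯s_{i+t-2} for 1 ≤ t ≤ j-i (so the first entry is z and the (j-i)-th entry is z·s_is_{i+1}⋯s_{j-2}) and whose last entry is z·s_is_{i+1}⋯s_{j-3}, is compatible with this reduced expression. -/

import Mathlib

/-- The longest element `w₀` of the symmetric group on `Fin n`,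
sending `t` to `n - 1 - t` (`0`-based), i.e. `t ↦ n + 1 - t` in `1`-based terms. -/
def w0 (n : ℕ) : Equiv.Perm (Fin n) :=
  ⟨Fin.rev, Fin.rev, fun x => Fin.rev_rev x, fun x => Fin.rev_rev x⟩

/-- The Coxeter length of a permutation: its number of inversions. -/
def len {n : ℕ} (x : Equiv.Perm (Fin n)) : ℕ :=
  (Finset.univ.filter fun ab : Fin n × Fin n => ab.1 < ab.2 ∧ x ab.2 < x ab.1).card

/-- The pattern `p ∈ S_m` consecutively appears in `x ∈ S_n` at (`1`-based) position `i`.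
Permutations of `{1, …, N}` are modelled (`0`-based) as permutations of `Fin N`. -/
def consecAppearsAt {m n : ℕ} (p : Equiv.Perm (Fin m)) (x : Equiv.Perm (Fin n)) (i : ℕ) :
    Prop :=
  ∃ h : 1 ≤ i ∧ i + m ≤ n + 1,
    ∀ a b : Fin m,
      p a < p b ↔
        x ⟨i - 1 + a.val, by have := a.isLt; omega⟩ <
          x ⟨i - 1 + b.val, by have := b.isLt; omega⟩

/-- `x` consecutively contains the pattern `p`. -/
def consecContains {m n : ℕ} (p : Equiv.Perm (Fin m)) (x : Equiv.Perm (Fin n)) : Prop :=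
  ∃ i : ℕ, consecAppearsAt p x i

/-- The pattern `2143 ∈ S₄` (`0`-based one-line notation: `1,0,3,2`). -/
def p2143 : Equiv.Perm (Fin 4) := Equiv.swap 0 1 * Equiv.swap 2 3

/-- The pattern `14325 ∈ S₅` (`0`-based one-line notation: `0,3,2,1,4`). -/
def p14325 : Equiv.Perm (Fin 5) := Equiv.swap 1 3

/-- The pattern `1536247 ∈ S₇` (`0`-based one-line notation: `0,4,2,5,1,3,6`). -/
def p1536247 : Equiv.Perm (Fin 7) := Equiv.swap 1 4 * Equiv.swap 3 5

/-- The pattern `1462537 ∈ S₇` (`0`-based one-line notation: `0,3,5,1,4,2,6`). -/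
def p1462537 : Equiv.Perm (Fin 7) := Equiv.swap 1 3 * Equiv.swap 2 5

/-- The pattern `1423 ∈ S₄` (`0`-based one-line notation: `0,3,1,2`). -/
def p1423 : Equiv.Perm (Fin 4) := Equiv.swap 1 2 * Equiv.swap 1 3

/-- The pattern `2314 ∈ S₄` (`0`-based one-line notation: `1,2,0,3`). -/
def p2314 : Equiv.Perm (Fin 4) := Equiv.swap 0 2 * Equiv.swap 0 1

/-- The simple transposition `s_t = (t, t+1)` (`1`-based) as a permutation of `Fin n`
(junk value `1` if `t` is out of range). -/
def simpleT (n t : ℕ) : Equiv.Perm (Fin n) :=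
  if h : 1 ≤ t ∧ t < n then Equiv.swap ⟨t - 1, by omega⟩ ⟨t, h.2⟩ else 1

/-- The product `s_a s_{a-1} ⋯ s_b` of simple transpositions with descending indices
(the identity if `b > a`). -/
def descProd (n a b : ℕ) : Equiv.Perm (Fin n) :=
  ((List.range (a + 1 - b)).map fun t => simpleT n (a - t)).prod

/-- The product `s_a s_{a+1} ⋯ s_b` of simple transpositions with ascending indices
(the identity if `b < a`). -/
def ascProd (n a b : ℕ) : Equiv.Perm (Fin n) :=
  ((List.range (b + 1 - a)).map fun t => simpleT n (a + t)).prod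

/-- `w s_b < w`, i.e. `s_b` is a right descent of `w`: `w(b) > w(b+1)` (`1`-based). -/
def rdes {n : ℕ} (w : Equiv.Perm (Fin n)) (b : ℕ) : Prop :=
  ∃ h : 1 ≤ b ∧ b < n, w ⟨b, h.2⟩ < w ⟨b - 1, by omega⟩

/-- `w s_b > w`, i.e. `s_b` is a right ascent of `w`: `w(b) < w(b+1)` (`1`-based). -/
def rasc {n : ℕ} (w : Equiv.Perm (Fin n)) (b : ℕ) : Prop :=
  ∃ h : 1 ≤ b ∧ b < n, w ⟨b - 1, by omega⟩ < w ⟨b, h.2⟩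

/-- `(W 1, …, W l)` is a strong right Bruhat walk: consecutive entries differ by right
multiplication by a simple transposition. -/
def isWalk {n : ℕ} (l : ℕ) (W : ℕ → Equiv.Perm (Fin n)) : Prop :=
  ∀ t : ℕ, 1 ≤ t → t + 1 ≤ l → ∃ b : ℕ, 1 ≤ b ∧ b < n ∧ W (t + 1) = W t * simpleT n b

/-- The walk `(W 1, …, W l)` is compatible with the reduced expression
`s_{ι 1} s_{ι 2} ⋯ s_{ι l}`. -/
def compat {n : ℕ} (l : ℕ) (ι : ℕ → ℕ) (W : ℕ → Equiv.Perm (Fin n)) : Prop :=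
  ∀ t : ℕ, 1 ≤ t → t ≤ l →
    rdes (W t) (ι t) ∧
    (2 ≤ t → rasc (W t) (ι (t - 1))) ∧
    (t + 1 ≤ l → rasc (W t) (ι (t + 1)))

/-- Membership in `X_{m,n}^i`: the one-line values at positions `i, i+1, …, i+m-1`
(`1`-based) are increasing. -/
def windowIncr {n : ℕ} (m i : ℕ) (x : Equiv.Perm (Fin n)) : Prop :=
  ∀ a b : Fin n, i - 1 ≤ a.val → a < b → b.val < i - 1 + m → x a < x b

/-- The order-preserving identification of `Fin m` with the window
`{o, o+1, …, o+m-1}` inside `Fin n`. -/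
def shiftEquiv (o m n : ℕ) (h : o + m ≤ n) :
    Fin m ≃ {x : Fin n // o ≤ x.val ∧ x.val < o + m} where
  toFun a := ⟨⟨o + a.val, by have := a.isLt; omega⟩, by
    refine ⟨Nat.le_add_right _ _, ?_⟩
    show o + a.val < o + m
    have := a.isLt; omega⟩
  invFun x := ⟨x.val.val - o, by have := x.prop; omega⟩
  left_inv a := by
    apply Fin.ext
    show o + a.val - o = a.val
    omega
  right_inv x := by
    apply Subtype.ext
    apply Fin.ext
    show o + (x.val.val - o) = x.val.val
    have := x.prop
    omega

/-- The shift `F_{m,n}^i : S_m → S_n`, sending `i+a-1 ↦ i+p(a)-1` (`1`-based) and fixing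
all other points. -/
def shiftPerm (m n i : ℕ) (h : i - 1 + m ≤ n) (p : Equiv.Perm (Fin m)) :
    Equiv.Perm (Fin n) :=
  Equiv.Perm.extendDomain p (shiftEquiv (i - 1) m n h)

lemma simpleT_mul_self {n b : ℕ} : simpleT n b * simpleT n b = 1 := by
  rw [simpleT]; split_ifs
  · exact Equiv.swap_mul_self _ _
  · simp

lemma ascProd_nil {n a b : ℕ} (h : b + 1 ≤ a) : ascProd n a b = 1 := by
  rw [ascProd]
  have : b + 1 - a = 0 := by omega
  simp [this]

lemma ascProd_succ {n a b : ℕ} (h : a ≤ b + 1) :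
    ascProd n a (b + 1) = ascProd n a b * simpleT n (b + 1) := by
  rw [ascProd, ascProd]
  have h2 : b + 1 + 1 - a = (b + 1 - a) + 1 := by omega
  rw [h2, List.range_succ, List.map_append, List.prod_append]
  have h3 : a + (b + 1 - a) = b + 1 := by omega
  simp [h3]

lemma simpleT_val {n : ℕ} (b : ℕ) (h1 : 1 ≤ b) (h2 : b < n) (x : Fin n) :
    ((simpleT n b) x).val = if x.val = b - 1 then b else if x.val = b then b - 1 else x.val := by
  rw [simpleT, dif_pos ⟨h1, h2⟩, Equiv.swap_apply_def]
  simp only [Fin.ext_iff]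
  split_ifs <;> simp_all

lemma ascProd_val {n : ℕ} (a b : ℕ) (ha : 1 ≤ a) (hb : b < n) (hab : a ≤ b + 1) (x : Fin n) :
    ((ascProd n a b) x).val =
      if a - 1 ≤ x.val ∧ x.val + 1 ≤ b then x.val + 1
      else if x.val = b then a - 1 else x.val := by
  induction b generalizing x with
  | zero =>
    have h : a = 1 := by omega
    subst h
    rw [ascProd_nil le_rfl]
    simp only [Equiv.Perm.one_apply]
    have := x.isLt
    split_ifs <;> omega
  | succ b ih =>
    rcases Nat.lt_or_ge (b + 1) a with h | h
    · have h' : a = b + 2 := by omega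
      rw [ascProd_nil (by omega)]
      simp only [Equiv.Perm.one_apply]
      split_ifs <;> omega
    · rw [ascProd_succ h, Equiv.Perm.mul_apply, ih (by omega) h,
        simpleT_val (b + 1) (by omega) hb]
      have := x.isLt
      split_ifs <;> omega

lemma z_val {n i j k : ℕ} (hi : 2 ≤ i) (hij : i + 2 < j) (hj : j < n) (hjk : j + 1 < k)
    (hk : k ≤ n) (x : Fin n) :
    ((Equiv.swap (⟨i - 2, by show i - 2 + 0 < n; omega⟩ : Fin n) ⟨i - 1, by show i - 1 + 0 < n; omega⟩)
      ((Equiv.swap (⟨j - 2, by show j - 2 + 0 < n; omega⟩ : Fin n) ⟨k - 1, by show k - 1 + 0 < n; omega⟩) x)).val =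
      if x.val = i - 2 then i - 1 else if x.val = i - 1 then i - 2
      else if x.val = j - 2 then k - 1 else if x.val = k - 1 then j - 2 else x.val := by
  simp only [Equiv.swap_apply_def, Fin.ext_iff]
  have := x.isLt
  split_ifs <;> simp_all <;> omega

lemma len_asc {n i j : ℕ} (hi : 2 ≤ i) (hij : i + 2 < j) (hj : j < n) :
    len (ascProd n (i - 1) (j - 1)) = j - i + 1 := by
  have key : (Finset.univ.filter fun ab : Fin n × Fin n =>
        ab.1 < ab.2 ∧ (ascProd n (i-1) (j-1)) ab.2 < (ascProd n (i-1) (j-1)) ab.1)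
      = (Finset.Icc (⟨i-2, by show i-2 + 0 < n; omega⟩ : Fin n) ⟨j-2, by show j-2 + 0 < n; omega⟩).image
          (fun x => (x, (⟨j-1, by show j-1 + 0 < n; omega⟩ : Fin n))) := by
    ext ⟨x, y⟩
    have hx := x.isLt
    have hy := y.isLt
    simp only [Finset.mem_filter, Finset.mem_univ, true_and, Finset.mem_image, Finset.mem_Icc,
      Fin.lt_def, Fin.le_def, Prod.mk.injEq, Fin.ext_iff]
    rw [ascProd_val (i-1) (j-1) (by omega) (by omega) (by omega) x,
        ascProd_val (i-1) (j-1) (by omega) (by omega) (by omega) y]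
    constructor
    · rintro ⟨h1, h2⟩
      refine ⟨x, ⟨?_, ?_⟩, rfl, ?_⟩ <;> simp_all <;> split_ifs at h2 <;> omega
    · rintro ⟨a, ⟨ha1, ha2⟩, h1, h2⟩
      split_ifs <;> omega
  rw [len, key, Finset.card_image_of_injective _ (fun a b h => (Prod.ext_iff.mp h).1),
    Fin.card_Icc]
  simp only [Fin.val_mk]
  omega


section Aux
variable {n i j k t : ℕ}

lemma gv (hi : 2 ≤ i) (hij : i + 2 < j) (hj : j < n) (hjk : j + 1 < k) (hk : k ≤ n)
    (e : ℕ) (he1 : i ≤ e + 1) (he2 : e ≤ j - 2) (p : ℕ) (hp : p < n) (v : ℕ)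
    (hv : ∀ a : ℕ, (a = if i - 1 ≤ p ∧ p + 1 ≤ e then p + 1 else if p = e then i - 1 else p) →
      v = if a = i - 2 then i - 1 else if a = i - 1 then i - 2
          else if a = j - 2 then k - 1 else if a = k - 1 then j - 2 else a) :
    ((Equiv.swap (⟨i - 2, by show i - 2 + 0 < n; omega⟩ : Fin n) ⟨i - 1, by show i - 1 + 0 < n; omega⟩)
      ((Equiv.swap (⟨j - 2, by show j - 2 + 0 < n; omega⟩ : Fin n) ⟨k - 1, by show k - 1 + 0 < n; omega⟩)
        ((ascProd n i e) ⟨p, hp⟩))).val = v := by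
  rw [z_val hi hij hj hjk hk, ascProd_val i e (by omega) (by omega) he1]
  simp only [Fin.val_mk]
  rw [hv _ rfl]

lemma cA1 (hi : 2 ≤ i) (hij : i + 2 < j) (hj : j < n) (hjk : j + 1 < k) (hk : k ≤ n)
    (ht1 : 1 ≤ t) (h : t ≤ j - i) :
    rdes (Equiv.swap (⟨i - 2, by show i - 2 + 0 < n; omega⟩ : Fin n) ⟨i - 1, by show i - 1 + 0 < n; omega⟩ *
      Equiv.swap (⟨j - 2, by show j - 2 + 0 < n; omega⟩ : Fin n) ⟨k - 1, by show k - 1 + 0 < n; omega⟩ * ascProd n i (i + t - 2))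
      (i + t - 2) := by
  refine ⟨⟨by omega, by omega⟩, ?_⟩
  rw [Fin.lt_def]
  simp only [Equiv.Perm.mul_apply]
  rw [gv hi hij hj hjk hk (i+t-2) (by omega) (by omega) (i+t-2) (by omega)
        (i-2) (by intro a ha; split_ifs at ha ⊢ <;> omega),
      gv hi hij hj hjk hk (i+t-2) (by omega) (by omega) (i+t-2-1) (by omega)
        (if 2 ≤ t then (if t = j - i then k - 1 else i + t - 2) else i - 1)
        (by intro a ha; split_ifs at ha ⊢ <;> omega)]
  split_ifs <;> omega

lemma cA2 (hi : 2 ≤ i) (hij : i + 2 < j) (hj : j < n) (hjk : j + 1 < k) (hk : k ≤ n)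
    (ht1 : 1 ≤ t) (h : t ≤ j - i) (h2t : 2 ≤ t) :
    rasc (Equiv.swap (⟨i - 2, by show i - 2 + 0 < n; omega⟩ : Fin n) ⟨i - 1, by show i - 1 + 0 < n; omega⟩ *
      Equiv.swap (⟨j - 2, by show j - 2 + 0 < n; omega⟩ : Fin n) ⟨k - 1, by show k - 1 + 0 < n; omega⟩ * ascProd n i (i + t - 2))
      (i + (t - 1) - 2) := by
  refine ⟨⟨by omega, by omega⟩, ?_⟩
  rw [Fin.lt_def]
  simp only [Equiv.Perm.mul_apply]
  rw [gv hi hij hj hjk hk (i+t-2) (by omega) (by omega) (i+(t-1)-2-1) (by omega)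
        (if 3 ≤ t then i + t - 3 else i - 1) (by intro a ha; split_ifs at ha ⊢ <;> omega),
      gv hi hij hj hjk hk (i+t-2) (by omega) (by omega) (i+(t-1)-2) (by omega)
        (if t = j - i then k - 1 else i + t - 2) (by intro a ha; split_ifs at ha ⊢ <;> omega)]
  split_ifs <;> omega

lemma cA3 (hi : 2 ≤ i) (hij : i + 2 < j) (hj : j < n) (hjk : j + 1 < k) (hk : k ≤ n)
    (ht1 : 1 ≤ t) (h : t ≤ j - i) :
    rasc (Equiv.swap (⟨i - 2, by show i - 2 + 0 < n; omega⟩ : Fin n) ⟨i - 1, by show i - 1 + 0 < n; omega⟩ *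
      Equiv.swap (⟨j - 2, by show j - 2 + 0 < n; omega⟩ : Fin n) ⟨k - 1, by show k - 1 + 0 < n; omega⟩ * ascProd n i (i + t - 2))
      (i + (t + 1) - 2) := by
  refine ⟨⟨by omega, by omega⟩, ?_⟩
  rw [Fin.lt_def]
  simp only [Equiv.Perm.mul_apply]
  rw [gv hi hij hj hjk hk (i+t-2) (by omega) (by omega) (i+(t+1)-2-1) (by omega)
        (i-2) (by intro a ha; split_ifs at ha ⊢ <;> omega),
      gv hi hij hj hjk hk (i+t-2) (by omega) (by omega) (i+(t+1)-2) (by omega)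
        (if i + t - 1 = j - 2 then k - 1 else i + t - 1)
        (by intro a ha; split_ifs at ha ⊢ <;> omega)]
  split_ifs <;> omega

lemma cB1 (hi : 2 ≤ i) (hij : i + 2 < j) (hj : j < n) (hjk : j + 1 < k) (hk : k ≤ n)
    (ht : t = j - i + 1) :
    rdes (Equiv.swap (⟨i - 2, by show i - 2 + 0 < n; omega⟩ : Fin n) ⟨i - 1, by show i - 1 + 0 < n; omega⟩ *
      Equiv.swap (⟨j - 2, by show j - 2 + 0 < n; omega⟩ : Fin n) ⟨k - 1, by show k - 1 + 0 < n; omega⟩ * ascProd n i (j - 3))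
      (i + t - 2) := by
  refine ⟨⟨by omega, by omega⟩, ?_⟩
  rw [Fin.lt_def]
  simp only [Equiv.Perm.mul_apply]
  rw [gv hi hij hj hjk hk (j-3) (by omega) (by omega) (i+t-2) (by omega)
        (j-1) (by intro a ha; split_ifs at ha ⊢ <;> omega),
      gv hi hij hj hjk hk (j-3) (by omega) (by omega) (i+t-2-1) (by omega)
        (k-1) (by intro a ha; split_ifs at ha ⊢ <;> omega)]
  omega

lemma cB2 (hi : 2 ≤ i) (hij : i + 2 < j) (hj : j < n) (hjk : j + 1 < k) (hk : k ≤ n)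
    (ht : t = j - i + 1) :
    rasc (Equiv.swap (⟨i - 2, by show i - 2 + 0 < n; omega⟩ : Fin n) ⟨i - 1, by show i - 1 + 0 < n; omega⟩ *
      Equiv.swap (⟨j - 2, by show j - 2 + 0 < n; omega⟩ : Fin n) ⟨k - 1, by show k - 1 + 0 < n; omega⟩ * ascProd n i (j - 3))
      (i + (t - 1) - 2) := by
  refine ⟨⟨by omega, by omega⟩, ?_⟩
  rw [Fin.lt_def]
  simp only [Equiv.Perm.mul_apply]
  rw [gv hi hij hj hjk hk (j-3) (by omega) (by omega) (i+(t-1)-2-1) (by omega)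
        (i-2) (by intro a ha; split_ifs at ha ⊢ <;> omega),
      gv hi hij hj hjk hk (j-3) (by omega) (by omega) (i+(t-1)-2) (by omega)
        (k-1) (by intro a ha; split_ifs at ha ⊢ <;> omega)]
  omega

end Aux

theorem stmt14 (n i j k : ℕ) (hn : 7 ≤ n) (hi : 2 ≤ i) (hi' : i ≤ n - 5)
    (hij : i + 2 < j) (hj : j < n) (hjk : j + 1 < k) (hk : k ≤ n)
    (z : Equiv.Perm (Fin n))
    (hz : z = Equiv.swap ⟨i - 2, by omega⟩ ⟨i - 1, by omega⟩ *
              Equiv.swap ⟨j - 2, by omega⟩ ⟨k - 1, by omega⟩) :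
    len (ascProd n (i - 1) (j - 1)) = j - i + 1 ∧
    isWalk (j - i + 1)
      (fun t => z * (if t ≤ j - i then ascProd n i (i + t - 2) else ascProd n i (j - 3))) ∧
    compat (j - i + 1) (fun t => i + t - 2)
      (fun t => z * (if t ≤ j - i then ascProd n i (i + t - 2) else ascProd n i (j - 3))) := by
  subst hz
  refine ⟨len_asc hi hij hj, ?_, ?_⟩
  · -- isWalk
    intro t ht1 ht2
    dsimp only
    rcases Nat.lt_or_ge t (j - i) with h | h
    · refine ⟨i + t - 1, by omega, by omega, ?_⟩
      rw [if_pos (by omega : t + 1 ≤ j - i), if_pos (by omega : t ≤ j - i)]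
      have h1 : i + (t + 1) - 2 = (i + t - 2) + 1 := by omega
      have h2 : (i + t - 2) + 1 = i + t - 1 := by omega
      rw [h1, ascProd_succ (by omega), h2]
      exact (mul_assoc _ _ _).symm
    · have ht : t = j - i := by omega
      refine ⟨j - 2, by omega, by omega, ?_⟩
      rw [if_neg (by omega : ¬ t + 1 ≤ j - i), if_pos (by omega : t ≤ j - i)]
      have h1 : i + t - 2 = (j - 3) + 1 := by omega
      have h2 : (j - 3) + 1 = j - 2 := by omega
      have key : ascProd n i (i + t - 2) * simpleT n (j - 2) = ascProd n i (j - 3) := by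
        rw [h1, ascProd_succ (by omega), h2, mul_assoc, simpleT_mul_self, mul_one]
      rw [← key]
      exact (mul_assoc _ _ _).symm
  · -- compat
    intro t ht1 ht2
    dsimp only
    rcases Nat.lt_or_ge (j - i) t with h | h
    · have ht : t = j - i + 1 := by omega
      rw [if_neg (by omega : ¬ t ≤ j - i)]
      exact ⟨cB1 hi hij hj hjk hk ht, fun _ => cB2 hi hij hj hjk hk ht,
        fun hc => absurd hc (by omega)⟩
    · rw [if_pos h]
      exact ⟨cA1 hi hij hj hjk hk ht1 h, fun h2t => cA2 hi hij hj hjk hk ht1 h h2t,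
        fun _ => cA3 hi hij hj hjk hk ht1 h⟩
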